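/- Let r ≥ 0 be an integer, ε > 0, and let (h_j) be 2K-periodic positive element sizes with h_j ≥ (2r+1)ε for all j and κ-regular for some κ ≥ 1. Let ω = (ω_j) be the unique solution of M ω = g, where M is the 2K-periodic tridiagonal exactness matrix and g_j = ½(h_j + h_{j+1}), and let ω̄_j = (h_j + h_{j+1})/(2(2r+1)) be the lumped weights. Then there is a constant C depending only on κ such that max_j |ω_j − ω̄_j| ≤ C ε if r ≥ 1, and ω_j = ω̄_j for all j if r = 0; i.e. the exact cluster-summation weights differ from the mass-lumped weights by at most O(ε). -/

import Mathlib

set_option maxHeartbeats 1000000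

private lemma per_shift (f : ℤ → ℝ) (p : ℤ) (h : ∀ k, f (k + p) = f k) (n k : ℤ) :
    f (k + p * n) = f k := by
  induction n using Int.induction_on with
  | zero => simp
  | succ m ih => rw [show k + p * ((m : ℤ) + 1) = (k + p * m) + p by ring, h, ih]
  | pred m ih =>
    have h2 : f (k + p * (-(m : ℤ)) - p) = f (k + p * (-(m : ℤ))) := by
      rw [← h (k + p * (-(m : ℤ)) - p)]
      congr 1; ring
    rw [show k + p * (-(m : ℤ) - 1) = (k + p * (-(m : ℤ))) - p by ring, h2, ih]

/-- on κ-regular meshes with non-overlapping clusters, the exact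
cluster-summation weights `ω` (solving `M ω = g`) differ from the mass-lumped
weights `ω̄_j = (h_j + h_{j+1})/(2(2r+1))` by at most `C ε` (with `C` depending
only on `κ`) if `r ≥ 1`, and coincide with them if `r = 0`. -/
theorem statement18 (κ : ℝ) (hκ : 1 ≤ κ) :
    ∃ C : ℝ, 0 < C ∧
      ∀ (K : ℤ), 1 ≤ K → ∀ (r : ℕ) (ε : ℝ), 0 < ε →
      ∀ hsz : ℤ → ℝ, (∀ k : ℤ, 0 < hsz k) → (∀ k : ℤ, hsz (k + 2 * K) = hsz k) →
        (∀ j : ℤ, (2 * (r : ℝ) + 1) * ε ≤ hsz j) →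
        (∀ k : ℤ, κ⁻¹ * hsz (k - 1) ≤ hsz k ∧ hsz k ≤ κ * hsz (k - 1)) →
      ∀ ω ωb : ℤ → ℝ,
        (∀ k : ℤ, ω (k + 2 * K) = ω k) →
        -- `ω` solves the exactness system `M ω = g`
        (∀ j : ℤ,
          ((r : ℝ) * ((r : ℝ) + 1) / 2) * ε / hsz j * ω (j - 1) +
            ((2 * (r : ℝ) + 1) -
              ((r : ℝ) * ((r : ℝ) + 1) / 2) * ε * (1 / hsz j + 1 / hsz (j + 1))) * ω j +
            ((r : ℝ) * ((r : ℝ) + 1) / 2) * ε / hsz (j + 1) * ω (j + 1) =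
          (hsz j + hsz (j + 1)) / 2) →
        (∀ j : ℤ, ωb j = (hsz j + hsz (j + 1)) / (2 * (2 * (r : ℝ) + 1))) →
        ((1 ≤ r → ∀ j : ℤ, |ω j - ωb j| ≤ C * ε) ∧
          (r = 0 → ∀ j : ℤ, ω j = ωb j)) := by
  have hκ0 : (0:ℝ) < κ := lt_of_lt_of_le one_pos hκ
  refine ⟨κ, hκ0, ?_⟩
  intro K hK r ε hε hsz hpos hper hsize hreg ω ωb hωper heq hωb
  constructor
  · -- r ≥ 1
    intro hr j
    set rr : ℝ := (r : ℝ) with hrr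
    have hrr1 : (1:ℝ) ≤ rr := by rw [hrr]; exact_mod_cast hr
    set a : ℝ := rr * (rr + 1) / 2 * ε with ha
    have ha0 : 0 < a := by
      have : (0:ℝ) < rr := by linarith
      positivity
    -- periodicity of ωb
    have hωbper : ∀ k : ℤ, ωb (k + 2*K) = ωb k := by
      intro k
      rw [hωb, hωb, hper k, show k + 2*K + 1 = (k+1) + 2*K by ring, hper (k+1)]
    have heper : ∀ k : ℤ, (fun i => ω i - ωb i) (k + 2*K) = (fun i => ω i - ωb i) k := by
      intro k; simp only; rw [hωper, hωbper]
    -- max over a period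
    have hKpos : (0:ℤ) < 2*K := by omega
    obtain ⟨j0, hj0S, hj0max⟩ := (Finset.Icc (0:ℤ) (2*K-1)).exists_max_image
      (fun i => |ω i - ωb i|) ⟨0, by simp [Finset.mem_Icc]; omega⟩
    have hall : ∀ i : ℤ, |ω i - ωb i| ≤ |ω j0 - ωb j0| := by
      intro i
      have hmod : i % (2*K) ∈ Finset.Icc (0:ℤ) (2*K-1) := by
        simp only [Finset.mem_Icc]
        exact ⟨Int.emod_nonneg i (by omega), by
          have := Int.emod_lt_of_pos i hKpos; omega⟩
      have h4 := per_shift (fun i => ω i - ωb i) (2*K) heper (i / (2*K)) (i % (2*K))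
      have h5 : i % (2*K) + 2*K * (i / (2*K)) = i := Int.emod_add_mul_ediv i (2*K)
      rw [h5] at h4
      rw [h4]
      exact hj0max _ hmod
    -- notation at the maximizer
    have hh0 : 0 < hsz j0 := hpos j0
    have hh0' : 0 < hsz (j0+1) := hpos (j0+1)
    have hhm0 : 0 < hsz (j0-1) := hpos (j0-1)
    have hhp0 : 0 < hsz (j0+2) := hpos (j0+2)
    have hsz1 : (2*rr+1)*ε ≤ hsz j0 := hsize j0
    have hsz2 : (2*rr+1)*ε ≤ hsz (j0+1) := hsize (j0+1)
    have h2r : (0:ℝ) < 2*rr+1 := by linarith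
    -- regularity facts
    have hreg1 : hsz (j0-1) ≤ κ * hsz j0 := by
      have := (hreg j0).1
      have h6 : κ⁻¹ * hsz (j0-1) ≤ hsz j0 := this
      calc hsz (j0-1) = κ * (κ⁻¹ * hsz (j0-1)) := by field_simp
        _ ≤ κ * hsz j0 := by nlinarith
    have hreg2 : hsz (j0+1) ≤ κ * hsz j0 := by
      have := (hreg (j0+1)).2
      rwa [show j0 + 1 - 1 = j0 by ring] at this
    have hreg3 : hsz (j0+2) ≤ κ * hsz (j0+1) := by
      have := (hreg (j0+2)).2
      rwa [show j0 + 2 - 1 = j0 + 1 by ring] at this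
    have hreg4 : hsz j0 ≤ κ * hsz (j0+1) := by
      have := (hreg (j0+1)).1
      rw [show j0 + 1 - 1 = j0 by ring] at this
      calc hsz j0 = κ * (κ⁻¹ * hsz j0) := by field_simp
        _ ≤ κ * hsz (j0+1) := by nlinarith
    -- mass lumping identity
    have hg : (2*rr+1) * ωb j0 = (hsz j0 + hsz (j0+1))/2 := by
      rw [hωb]; field_simp
    -- the error equation
    set f : ℝ := a/hsz j0 * (ωb (j0-1) - ωb j0) + a/hsz (j0+1) * (ωb (j0+1) - ωb j0) with hf
    have herr : a/hsz j0 * (ω (j0-1) - ωb (j0-1)) +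
        ((2*rr+1) - a/hsz j0 - a/hsz (j0+1)) * (ω j0 - ωb j0) +
        a/hsz (j0+1) * (ω (j0+1) - ωb (j0+1)) = -f := by
      have h1 := heq j0
      rw [hf, ha]
      linear_combination h1 - hg
    -- bounds on the off-diagonal coefficients
    have hAle : a / hsz j0 ≤ (rr+1)/4 := by
      rw [div_le_iff₀ hh0]
      nlinarith [mul_le_mul_of_nonneg_left hsz1 (show (0:ℝ) ≤ (rr+1)/4 by positivity)]
    have hBle : a / hsz (j0+1) ≤ (rr+1)/4 := by
      rw [div_le_iff₀ hh0']
      nlinarith [mul_le_mul_of_nonneg_left hsz2 (show (0:ℝ) ≤ (rr+1)/4 by positivity)]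
    have hA0 : 0 ≤ a / hsz j0 := by positivity
    have hB0 : 0 ≤ a / hsz (j0+1) := by positivity
    -- bound on f
    have hΔ1 : ωb (j0-1) - ωb j0 = (hsz (j0-1) - hsz (j0+1)) / (2*(2*rr+1)) := by
      rw [hωb, hωb, show j0 - 1 + 1 = j0 by ring]
      ring
    have hΔ2 : ωb (j0+1) - ωb j0 = (hsz (j0+2) - hsz j0) / (2*(2*rr+1)) := by
      rw [hωb, hωb, show j0 + 1 + 1 = j0 + 2 by ring]
      ring
    have habs1 : |ωb (j0-1) - ωb j0| ≤ κ * hsz j0 / (2*(2*rr+1)) := by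
      rw [hΔ1, abs_div, abs_of_pos (show (0:ℝ) < 2*(2*rr+1) by linarith)]
      gcongr
      rw [abs_le]
      constructor <;> nlinarith
    have habs2 : |ωb (j0+1) - ωb j0| ≤ κ * hsz (j0+1) / (2*(2*rr+1)) := by
      rw [hΔ2, abs_div, abs_of_pos (show (0:ℝ) < 2*(2*rr+1) by linarith)]
      gcongr
      rw [abs_le]
      constructor <;> nlinarith
    have hfbd : |f| ≤ κ * a / (2*rr+1) := by
      have t1 : |a/hsz j0 * (ωb (j0-1) - ωb j0)| ≤ κ * a / (2*(2*rr+1)) := by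
        rw [abs_mul, abs_of_nonneg hA0]
        calc a/hsz j0 * |ωb (j0-1) - ωb j0| ≤ a/hsz j0 * (κ * hsz j0 / (2*(2*rr+1))) := by
              apply mul_le_mul_of_nonneg_left habs1 hA0
          _ = κ * a / (2*(2*rr+1)) := by field_simp
      have t2 : |a/hsz (j0+1) * (ωb (j0+1) - ωb j0)| ≤ κ * a / (2*(2*rr+1)) := by
        rw [abs_mul, abs_of_nonneg hB0]
        calc a/hsz (j0+1) * |ωb (j0+1) - ωb j0| ≤ a/hsz (j0+1) * (κ * hsz (j0+1) / (2*(2*rr+1))) := by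
              apply mul_le_mul_of_nonneg_left habs2 hB0
          _ = κ * a / (2*(2*rr+1)) := by field_simp
      calc |f| ≤ |a/hsz j0 * (ωb (j0-1) - ωb j0)| + |a/hsz (j0+1) * (ωb (j0+1) - ωb j0)| := by
            rw [hf]; exact abs_add_le _ _
        _ ≤ κ * a / (2*(2*rr+1)) + κ * a / (2*(2*rr+1)) := add_le_add t1 t2
        _ = κ * a / (2*rr+1) := by
            have h2rne : (2*rr+1) ≠ 0 := ne_of_gt h2r
            field_simp
            ring
    -- diagonal dominance argument
    have hcoef : (0:ℝ) < (2*rr+1) - a/hsz j0 - a/hsz (j0+1) := by nlinarith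
    have hkey : ((2*rr+1) - a/hsz j0 - a/hsz (j0+1)) * |ω j0 - ωb j0| ≤
        |f| + (a/hsz j0 + a/hsz (j0+1)) * |ω j0 - ωb j0| := by
      have h1 : ((2*rr+1) - a/hsz j0 - a/hsz (j0+1)) * (ω j0 - ωb j0) =
          (-f) + (-(a/hsz j0 * (ω (j0-1) - ωb (j0-1)))) +
          (-(a/hsz (j0+1) * (ω (j0+1) - ωb (j0+1)))) := by linarith [herr]
      calc ((2*rr+1) - a/hsz j0 - a/hsz (j0+1)) * |ω j0 - ωb j0|
          = |((2*rr+1) - a/hsz j0 - a/hsz (j0+1)) * (ω j0 - ωb j0)| := by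
            rw [abs_mul, abs_of_pos hcoef]
        _ = |(-f) + (-(a/hsz j0 * (ω (j0-1) - ωb (j0-1)))) +
              (-(a/hsz (j0+1) * (ω (j0+1) - ωb (j0+1))))| := by rw [h1]
        _ ≤ |(-f)| + |(-(a/hsz j0 * (ω (j0-1) - ωb (j0-1))))| +
              |(-(a/hsz (j0+1) * (ω (j0+1) - ωb (j0+1))))| := abs_add_three _ _ _
        _ = |f| + (a/hsz j0) * |ω (j0-1) - ωb (j0-1)| +
              (a/hsz (j0+1)) * |ω (j0+1) - ωb (j0+1)| := by
            rw [abs_neg, abs_neg, abs_neg, abs_mul, abs_mul,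
              abs_of_nonneg hA0, abs_of_nonneg hB0]
        _ ≤ |f| + (a/hsz j0) * |ω j0 - ωb j0| + (a/hsz (j0+1)) * |ω j0 - ωb j0| := by
            have := hall (j0-1); have := hall (j0+1)
            gcongr <;> assumption
        _ = |f| + (a/hsz j0 + a/hsz (j0+1)) * |ω j0 - ωb j0| := by ring
    -- conclude
    have hmargin : rr * |ω j0 - ωb j0| ≤ |f| := by
      have hE0 : 0 ≤ |ω j0 - ωb j0| := abs_nonneg _
      nlinarith [hkey, hAle, hBle]
    have hfin : |ω j0 - ωb j0| ≤ κ * ε := by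
      have h7 : rr * |ω j0 - ωb j0| ≤ κ * a / (2*rr+1) := le_trans hmargin hfbd
      have h8 : rr * |ω j0 - ωb j0| * (2*rr+1) ≤ κ * a := by
        rw [← le_div_iff₀ h2r]; exact h7
      have hE0 : 0 ≤ |ω j0 - ωb j0| := abs_nonneg _
      rw [ha] at h8
      have hrpos : (0:ℝ) < rr := by linarith
      have h9 : (0:ℝ) < rr*(2*rr+1) := by positivity
      have h10 : rr*(2*rr+1) * |ω j0 - ωb j0| ≤ rr*(2*rr+1) * (κ*ε) := by
        nlinarith [h8, mul_pos (mul_pos hκ0 hε) hrpos,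
          show (0:ℝ) < 3*rr+1 by linarith]
      exact le_of_mul_le_mul_left h10 h9
    exact le_trans (hall j) hfin
  · -- r = 0
    intro hr0 j
    subst hr0
    have h1 := heq j
    have h2 := hωb j
    norm_num at h1 h2
    linarith
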